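/- For ε > 0, let F < 0, λ₁ ≤ 0, γ ≤ 0 with γ² + 8λ₁F > 0, and define y(x) := (2√(−F)/√(1+ε))·artanh(x/√(1+ε)) and W(x) := 2F/(γ − √(γ²+8λ₁F)·cosh y(x)) for x ∈ [−1,1]. Then W > 0 on [−1,1], W is even, W'(0) = 0, and W satisfies the ODE (W'/(2W))² = (2λ₁W² + γW − F)/(1+ε−x²)² on (−1,1). -/

import Mathlib

open Real Set

/-- The inverse hyperbolic tangent. -/
noncomputable def artanh (x : ℝ) : ℝ := (1/2) * Real.log ((1 + x) / (1 - x))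

lemma artanh_odd (x : ℝ) : _root_.artanh (-x) = -_root_.artanh x := by
  unfold _root_.artanh
  have : (1 + -x) / (1 - -x) = ((1 + x) / (1 - x))⁻¹ := by
    rw [inv_div]; ring_nf
  rw [this, Real.log_inv]; ring

/-- For ε > 0, F < 0, λ₁ ≤ 0, γ ≤ 0 with γ² + 8λ₁F > 0, the function
W(x) = 2F/(γ − √(γ²+8λ₁F)cosh y(x)), y(x) = (2√(−F)/√(1+ε))artanh(x/√(1+ε)),
is positive on [−1,1], even, has W'(0) = 0, and satisfies
(W'/(2W))² = (2λ₁W² + γW − F)/(1+ε−x²)² on (−1,1). -/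
theorem stmt_11 (ε F lam₁ γ : ℝ) (hε : 0 < ε) (hF : F < 0) (hlam₁ : lam₁ ≤ 0)
    (hγ : γ ≤ 0) (hdisc : 0 < γ^2 + 8 * lam₁ * F)
    (y W : ℝ → ℝ)
    (hy : y = fun x => (2 * Real.sqrt (-F) / Real.sqrt (1 + ε)) *
      _root_.artanh (x / Real.sqrt (1 + ε)))
    (hW : W = fun x => 2 * F / (γ - Real.sqrt (γ^2 + 8 * lam₁ * F) * Real.cosh (y x))) :
    (∀ x ∈ Icc (-1:ℝ) 1, 0 < W x) ∧
    (∀ x : ℝ, W (-x) = W x) ∧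
    deriv W 0 = 0 ∧
    (∀ x ∈ Ioo (-1:ℝ) 1,
      (deriv W x / (2 * W x))^2 =
        (2 * lam₁ * (W x)^2 + γ * W x - F) / (1 + ε - x^2)^2) := by
  set s := Real.sqrt (1 + ε) with hs
  set a := Real.sqrt (-F) with ha
  set D := Real.sqrt (γ^2 + 8 * lam₁ * F) with hD
  have hs2 : s^2 = 1 + ε := Real.sq_sqrt (by linarith)
  have hs1 : 1 < s := by
    nlinarith [Real.sqrt_nonneg (1 + ε), hs2]
  have ha2 : a^2 = -F := Real.sq_sqrt (by linarith)
  have hD2 : D^2 = γ^2 + 8 * lam₁ * F := Real.sq_sqrt (le_of_lt hdisc)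
  have hDpos : 0 < D := Real.sqrt_pos.mpr hdisc
  have hden_neg : ∀ x : ℝ, γ - D * Real.cosh (y x) < 0 := by
    intro x
    have h1 : 1 ≤ Real.cosh (y x) := Real.one_le_cosh _
    nlinarith
  have hWpos : ∀ x : ℝ, 0 < W x := by
    intro x
    rw [hW]
    exact div_pos_of_neg_of_neg (by linarith) (hden_neg x)
  have hyodd : ∀ x : ℝ, y (-x) = -(y x) := by
    intro x
    simp only [hy]
    rw [neg_div, artanh_odd]; ring
  have hWeven : ∀ x : ℝ, W (-x) = W x := by
    intro x
    simp only [hW, hyodd, Real.cosh_neg]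
  refine ⟨fun x _ => hWpos x, hWeven, ?_, ?_⟩
  · have h0 : deriv (fun x => W (-x)) 0 = -deriv W 0 := by
      rw [deriv_comp_neg]; ring_nf
    have h1 : (fun x => W (-x)) = W := funext hWeven
    rw [h1] at h0
    linarith
  · intro x hx
    obtain ⟨hx1, hx2⟩ := hx
    have hspos : 0 < s := by linarith
    have hq : 0 < 1 + ε - x^2 := by nlinarith
    have hqs : s^2 - x^2 = 1 + ε - x^2 := by rw [hs2]
    have hu1 : 0 < 1 - x/s := by
      rw [sub_pos, div_lt_one hspos]; linarith
    have hu2 : 0 < 1 + x/s := by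
      have h : 1 + x/s = (s + x)/s := by field_simp
      rw [h]; exact div_pos (by linarith) hspos
    have hsne : s ≠ 0 := ne_of_gt hspos
    have hu1ne : (1 - x/s) ≠ 0 := ne_of_gt hu1
    have hu2ne : (1 + x/s) ≠ 0 := ne_of_gt hu2
    have hf : (0:ℝ) < (1 + x/s)/(1 - x/s) := div_pos hu2 hu1
    have hnum : HasDerivAt (fun t : ℝ => 1 + t/s) (1/s) x := by
      simpa using ((hasDerivAt_id x).div_const s).const_add (1:ℝ)
    have hden' : HasDerivAt (fun t : ℝ => 1 - t/s) (-(1/s)) x := by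
      simpa using ((hasDerivAt_id x).div_const s).const_sub (1:ℝ)
    have h_inner := hnum.div hden' hu1ne
    have h_log := h_inner.log (ne_of_gt hf)
    have hyd : HasDerivAt y (2*a/(1 + ε - x^2)) x := by
      have h := (h_log.const_mul ((1:ℝ)/2)).const_mul (2*a/s)
      have hyfun : y = fun t => (2*a/s) * ((1/2) * Real.log ((1+t/s)/(1-t/s))) := by
        funext t; rw [hy]; simp only [_root_.artanh]
      rw [hyfun]
      refine h.congr_deriv (Eq.symm ?_); simp only [Pi.div_apply]
      have hsx1 : s - x ≠ 0 := by intro hc; linarith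
      have hsx2 : s + x ≠ 0 := by intro hc; linarith
      have e1 : (1:ℝ) - x/s = (s-x)/s := by field_simp
      have e2 : (1:ℝ) + x/s = (s+x)/s := by field_simp
      rw [← hqs, e1, e2]
      have h1 : s^2 - x^2 ≠ 0 := by rw [hqs]; exact ne_of_gt hq
      field_simp
      ring
    have hDen : HasDerivAt (fun t => γ - D * Real.cosh (y t))
        (-(D * (Real.sinh (y x) * (2*a/(1 + ε - x^2))))) x :=
      ((hyd.cosh).const_mul D).const_sub γ
    set c := Real.cosh (y x) with hcdef
    set sh := Real.sinh (y x) with hshdef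
    have hne : γ - D * c ≠ 0 := ne_of_lt (hden_neg x)
    have hWd : HasDerivAt W
        ((0 * (γ - D*c) - 2*F * (-(D * (sh * (2*a/(1 + ε - x^2)))))) / (γ - D*c)^2) x := by
      rw [hW]; exact (hasDerivAt_const x (2*F)).div hDen hne
    have hdW := hWd.deriv
    have hWx : W x = 2*F/(γ - D*c) := by rw [hW]
    have hc : c^2 = sh^2 + 1 := by rw [hcdef, hshdef, Real.cosh_sq]
    clear_value c sh
    clear_value s a D
    have key : a^2*D^2*sh^2 = 8*lam₁*F^2 + 2*γ*F*(γ-D*c) - F*(γ-D*c)^2 := by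
      linear_combination D^2*sh^2*ha2 + F*hD2 + F*D^2*hc
    have hFne : F ≠ 0 := ne_of_lt hF
    have hqne : (1 + ε - x^2) ≠ 0 := ne_of_gt hq
    calc (deriv W x / (2 * W x))^2
        = (a^2*D^2*sh^2)/((1 + ε - x^2)^2*(γ-D*c)^2) := by
          rw [hdW, hWx]; field_simp; ring
      _ = (8*lam₁*F^2 + 2*γ*F*(γ-D*c) - F*(γ-D*c)^2)/((1 + ε - x^2)^2*(γ-D*c)^2) := by
          rw [key]
      _ = (2 * lam₁ * (W x)^2 + γ * W x - F) / (1 + ε - x^2)^2 := by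
          rw [hWx]; field_simp; ring
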